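/- For a 2-connected bipartite graph G and any vertex w, there exists a vertex z and a shortest path P from z to w such that there are at least two edges e', e'' ∉ E(P) with μ_{z,w}(e') = μ_{z,w}(e'') = 1; specifically one can take z antipodal to w on a shortest cycle through w. -/

import Mathlib

open Finset

variable {V : Type*} [Fintype V] [DecidableEq V]

/-- Number of vertices strictly closer to `u` than to `v`. -/
noncomputable def nCloser (G : SimpleGraph V) (u v : V) : ℕ :=
  (Finset.univ.filter (fun w => G.dist u w < G.dist v w)).card

/-- Number of vertices equidistant from `u` and `v`. -/
noncomputable def nEqual (G : SimpleGraph V) (u v : V) : ℕ :=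
  (Finset.univ.filter (fun w => G.dist u w = G.dist v w)).card

/-- `n_0(e)` for an edge `e`. -/
noncomputable def nZero (G : SimpleGraph V) : Sym2 V → ℕ :=
  Sym2.lift ⟨fun u v => nEqual G u v, by
    intro u v
    unfold nEqual
    exact congrArg Finset.card (Finset.filter_congr fun w _ => eq_comm)⟩

/-- The contribution `n_u(e) * n_v(e)` of an edge `e`. -/
noncomputable def edgeContribution (G : SimpleGraph V) : Sym2 V → ℕ :=
  Sym2.lift ⟨fun u v => nCloser G u v * nCloser G v u, fun u v => Nat.mul_comm _ _⟩

/-- The Szeged index `Sz(G) = ∑_{e = uv ∈ E} n_u(e) n_v(e)`. -/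
noncomputable def szeged (G : SimpleGraph V) [DecidableRel G.Adj] : ℕ :=
  ∑ e ∈ G.edgeFinset, edgeContribution G e

/-- The revised Szeged index `Sz*(G) = ∑_{e=uv∈E} (n_u(e)+n_0(e)/2)(n_v(e)+n_0(e)/2)`. -/
noncomputable def szegedStar (G : SimpleGraph V) [DecidableRel G.Adj] : ℚ :=
  ∑ e ∈ G.edgeFinset,
    Sym2.lift ⟨fun u v =>
      ((nCloser G u v : ℚ) + (nEqual G u v : ℚ) / 2) *
        ((nCloser G v u : ℚ) + (nEqual G u v : ℚ) / 2), by
      intro u v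
      have h : nEqual G u v = nEqual G v u := by
        unfold nEqual
        exact congrArg Finset.card (Finset.filter_congr fun w _ => eq_comm)
      dsimp only; rw [h]; ring⟩ e

/-- The Wiener index `W(G) = ∑_{{x,y} ⊆ V} d(x,y)`. -/
noncomputable def wiener (G : SimpleGraph V) : ℕ :=
  ∑ p ∈ Finset.univ.sym2, Sym2.lift ⟨fun x y => G.dist x y, fun x y => G.dist_comm⟩ p

/-- `μ_{x,y}(e)`: the indicator that `x` and `y` are strictly closer to
opposite endpoints of the edge `e`. -/
noncomputable def mu (G : SimpleGraph V) (x y : V) : Sym2 V → ℕ :=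
  Sym2.lift ⟨fun u v =>
    if (G.dist x u < G.dist x v ∧ G.dist y v < G.dist y u) ∨
        (G.dist x v < G.dist x u ∧ G.dist y u < G.dist y v) then 1 else 0, by
    intro u v
    dsimp only; exact if_congr or_comm rfl rfl⟩

/-- A graph is 2-connected if it has at least 3 vertices and removing any
single vertex leaves it connected. -/
def TwoConnected (G : SimpleGraph V) : Prop :=
  3 ≤ Fintype.card V ∧ ∀ v : V, (G.induce {u : V | u ≠ v}).Connected



section Aux
variable {G : SimpleGraph V}
open SimpleGraph


/-- Parity of a walk's length is determined by the colors of its endpoints. -/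
lemma walk_parity' (c : G.Coloring (Fin 2)) {u v : V} (p : G.Walk u v) :
    Even p.length ↔ c u = c v := by
  induction p with
  | nil => simp
  | @cons a b v h p ih =>
    have hab : c a ≠ c b := c.valid h
    simp only [SimpleGraph.Walk.length_cons, Nat.even_add_one, ih]
    revert hab
    generalize c a = x; generalize c b = y; generalize c v = z
    revert x y z; decide

lemma dist_parity' (c : G.Coloring (Fin 2)) {u v : V} (h : G.Reachable u v) :
    (Even (G.dist u v) ↔ c u = c v) := by
  obtain ⟨p, _, hl⟩ := h.exists_path_of_dist
  rw [← hl]; exact walk_parity' c p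

lemma adj_dist_ne' (hc : G.Connected) (c : G.Coloring (Fin 2)) {a b : V} (hab : G.Adj a b)
    (t : V) : G.dist t a ≠ G.dist t b := by
  intro h
  have h1 := dist_parity' c (hc t a)
  have h2 := dist_parity' c (hc t b)
  rw [h, h2] at h1
  have hne : c a ≠ c b := c.valid hab
  revert hne h1
  generalize c t = x; generalize c a = y; generalize c b = z
  revert x y z; decide

lemma exists_adj_of_reachable_ne {W : Type*} {H : SimpleGraph W} {a b : W}
    (h : H.Reachable a b) (hne : a ≠ b) : ∃ u, H.Adj a u := by
  obtain ⟨p⟩ := h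
  cases p with
  | nil => exact absurd rfl hne
  | cons h _ => exact ⟨_, h⟩

set_option linter.unusedSectionVars false

lemma mem_support_of_mem_edge' {u v x : V} {p : G.Walk u v} {e : Sym2 V}
    (he : e ∈ p.edges) (hx : x ∈ e) : x ∈ p.support := by
  induction e with
  | _ a b =>
    rcases Sym2.mem_iff.mp hx with rfl | rfl
    · exact p.fst_mem_support_of_mem_edges he
    · exact p.snd_mem_support_of_mem_edges he

/-- All edges of a path containing its first vertex coincide. -/
lemma path_start_edge_unique {x w : V} (p : G.Walk x w) (hp : p.IsPath) :
    ∀ e ∈ p.edges, x ∈ e → ∀ e' ∈ p.edges, x ∈ e' → e = e' := by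
  cases p with
  | nil => simp
  | @cons _ b _ h p' =>
    have hx : x ∉ p'.support := ((SimpleGraph.Walk.cons_isPath_iff h p').mp hp).2
    intro e he hxe e' he' hxe'
    rw [SimpleGraph.Walk.edges_cons, List.mem_cons] at he he'
    rcases he with rfl | he
    · rcases he' with rfl | he'
      · rfl
      · exact absurd (mem_support_of_mem_edge' he' hxe') hx
    · exact absurd (mem_support_of_mem_edge' he hxe) hx

lemma exists_start_edge {u v : V} (p : G.Walk u v) (h : u ≠ v) :
    ∃ e ∈ p.edges, u ∈ e := by
  cases p with
  | nil => exact absurd rfl h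
  | @cons _ b _ hadj p' =>
    exact ⟨s(u, b), by simp, Sym2.mem_mk_left _ _⟩

/-- An internal vertex of a path lies on two distinct edges of the path. -/
lemma path_internal_two_edges {y w : V} (p : G.Walk y w) {x : V} :
    p.IsPath → x ∈ p.support → x ≠ y → x ≠ w →
    ∃ e1 e2 : Sym2 V, e1 ≠ e2 ∧ e1 ∈ p.edges ∧ e2 ∈ p.edges ∧ x ∈ e1 ∧ x ∈ e2 := by
  induction p with
  | nil =>
    intro _ hx hxy _
    simp only [SimpleGraph.Walk.support_nil, List.mem_singleton] at hx
    exact absurd hx hxy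
  | @cons u v w' h p' ih =>
    intro hp hx hxu hxw
    rw [SimpleGraph.Walk.cons_isPath_iff] at hp
    rw [SimpleGraph.Walk.support_cons, List.mem_cons] at hx
    rcases hx with rfl | hx
    · exact absurd rfl hxu
    by_cases hxv : x = v
    · subst hxv
      cases p' with
      | nil => exact absurd rfl hxw
      | @cons _ b _ h2 p'' =>
        refine ⟨s(u, x), s(x, b), ?_, by simp, ?_, Sym2.mem_mk_right _ _,
          Sym2.mem_mk_left _ _⟩
        · intro hcontra
          rw [Sym2.eq_iff] at hcontra
          rcases hcontra with ⟨h1, _⟩ | ⟨h1, _⟩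
          · exact h.ne h1
          · apply hp.2
            rw [h1, SimpleGraph.Walk.support_cons]
            exact List.mem_cons_of_mem _ p''.start_mem_support
        · rw [SimpleGraph.Walk.edges_cons, List.mem_cons]
          exact Or.inr (by simp)
    · obtain ⟨e1, e2, hne, he1, he2, hx1, hx2⟩ := ih hp.1 hx hxv hxw
      exact ⟨e1, e2, hne, by simp [he1], by simp [he2], hx1, hx2⟩

lemma exists_third_vertex (hcard : 3 ≤ Fintype.card V) (a b : V) :
    ∃ v : V, v ≠ a ∧ v ≠ b := by
  by_contra hno
  push_neg at hno
  have hsub : (Finset.univ : Finset V) ⊆ {a, b} := by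
    intro v _
    rcases Classical.em (v = a) with rfl | hva
    · simp
    · simp [hno v hva]
  have := Finset.card_le_card hsub
  have h2 : ({a, b} : Finset V).card ≤ 2 :=
    le_trans (Finset.card_insert_le _ _) (by simp)
  rw [Finset.card_univ] at this
  omega

lemma twoConnected_connected' (hcard : 3 ≤ Fintype.card V)
    (hind : ∀ v : V, (G.induce {u : V | u ≠ v}).Connected) : G.Connected := by
  have hne : Nonempty V := Fintype.card_pos_iff.mp (by omega)
  rw [SimpleGraph.connected_iff]
  refine ⟨fun a b => ?_, hne⟩
  obtain ⟨v, hva, hvb⟩ := exists_third_vertex hcard a b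
  have hr := (hind v) ⟨a, hva.symm⟩ ⟨b, hvb.symm⟩
  have := hr.map (SimpleGraph.Embedding.induce {u : V | u ≠ v}).toHom
  simpa using this

lemma second_neighbor' (hcard : 3 ≤ Fintype.card V)
    (hind : ∀ v : V, (G.induce {u : V | u ≠ v}).Connected) {z x : V} (hzx : G.Adj z x) :
    ∃ y, G.Adj z y ∧ y ≠ x := by
  obtain ⟨v, hvz, hvx⟩ := exists_third_vertex hcard z x
  have hzne : z ≠ x := hzx.ne
  have hr := (hind x) ⟨z, hzne⟩ ⟨v, hvx⟩
  obtain ⟨u, hu⟩ := exists_adj_of_reachable_ne hr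
    (fun h => hvz (congrArg Subtype.val h).symm)
  exact ⟨u.1, hu, u.2⟩

/-- Every edge of a walk of minimal length is a "cut" edge for its endpoints. -/
lemma shortest_walk_edges (hc : G.Connected) {z w : V} (q : G.Walk z w) :
    q.length = G.dist z w → ∀ e ∈ q.edges,
      ∃ a b : V, e = s(a, b) ∧ G.dist z b = G.dist z a + 1 ∧
        G.dist w a = G.dist w b + 1 ∧ G.dist z a + G.dist w a = G.dist z w := by
  induction q with
  | nil => simp
  | @cons u v w' h q' ih =>
    intro hl e he
    rw [SimpleGraph.Walk.length_cons] at hl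
    have huv : G.dist u v = 1 := SimpleGraph.dist_eq_one_iff_adj.mpr h
    have t1 : G.dist u w' ≤ G.dist u v + G.dist v w' := hc.dist_triangle
    have t2 : G.dist v w' ≤ q'.length := SimpleGraph.dist_le q'
    have hq' : q'.length = G.dist v w' := by omega
    have hd : G.dist u w' = G.dist v w' + 1 := by omega
    rw [SimpleGraph.Walk.edges_cons, List.mem_cons] at he
    rcases he with rfl | he
    · refine ⟨u, v, rfl, ?_, ?_, ?_⟩
      · rw [SimpleGraph.dist_self, huv]
      · have c1 : G.dist w' u = G.dist u w' := SimpleGraph.dist_comm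
        have c2 : G.dist w' v = G.dist v w' := SimpleGraph.dist_comm
        omega
      · have c1 : G.dist w' u = G.dist u w' := SimpleGraph.dist_comm
        rw [SimpleGraph.dist_self]
        omega
    · obtain ⟨a, b, rfl, h1, h2, h3⟩ := ih hq' _ he
      have ta1 : G.dist u w' ≤ G.dist u a + G.dist a w' := hc.dist_triangle
      have ta2 : G.dist u a ≤ G.dist u v + G.dist v a := hc.dist_triangle
      have tb1 : G.dist u w' ≤ G.dist u b + G.dist b w' := hc.dist_triangle
      have tb2 : G.dist u b ≤ G.dist u v + G.dist v b := hc.dist_triangle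
      have ca : G.dist a w' = G.dist w' a := SimpleGraph.dist_comm
      have cb : G.dist b w' = G.dist w' b := SimpleGraph.dist_comm
      refine ⟨a, b, rfl, by omega, h2, by omega⟩

end Aux

lemma mu_eq_one_of {G : SimpleGraph V} {z w a b : V} (h1 : G.dist z a < G.dist z b)
    (h2 : G.dist w b < G.dist w a) : mu G z w s(a, b) = 1 := by
  unfold mu
  rw [Sym2.lift_mk]
  exact if_pos (Or.inl ⟨h1, h2⟩)

theorem exists_two_mu_edges_off_shortest_path (G : SimpleGraph V) [DecidableRel G.Adj]
    (h2 : TwoConnected G) (hbip : G.Colorable 2) (w : V) :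
    ∃ (z : V) (p : G.Walk z w), p.IsPath ∧ p.length = G.dist z w ∧
      ∃ e' e'' : Sym2 V, e' ≠ e'' ∧ e' ∈ G.edgeFinset ∧ e'' ∈ G.edgeFinset ∧
        e' ∉ p.edges ∧ e'' ∉ p.edges ∧ mu G z w e' = 1 ∧ mu G z w e'' = 1 := by
  classical
  obtain ⟨hcard, hind⟩ := h2
  obtain ⟨c⟩ := hbip
  have hconn : G.Connected := twoConnected_connected' hcard hind
  obtain ⟨z, -, hzmax⟩ := Finset.univ.exists_max_image (fun v => G.dist w v)
    ⟨w, Finset.mem_univ w⟩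
  have hmax : ∀ v : V, G.dist w v ≤ G.dist w z := fun v => hzmax v (Finset.mem_univ v)
  have hcm : G.dist z w = G.dist w z := SimpleGraph.dist_comm
  have hD2 : 2 ≤ G.dist w z := by
    rcases Nat.lt_or_ge (G.dist w z) 2 with hlt | hge
    · exfalso
      have h01 : G.dist w z = 0 ∨ G.dist w z = 1 := by omega
      rcases h01 with h0 | h1
      · have hall : ∀ v : V, v = w := by
          intro v
          have : G.dist w v = 0 := by have := hmax v; omega
          exact ((hconn.dist_eq_zero_iff).mp this).symm
        have : Fintype.card V ≤ 1 :=
          Fintype.card_le_one_iff.mpr fun a b => by rw [hall a, hall b]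
        omega
      · have hadj : ∀ v : V, v ≠ w → G.Adj w v := by
          intro v hv
          have hne0 : G.dist w v ≠ 0 := fun h0 => hv ((hconn.dist_eq_zero_iff).mp h0).symm
          have hle := hmax v
          exact SimpleGraph.dist_eq_one_iff_adj.mp (by omega)
        obtain ⟨a, haw, -⟩ := exists_third_vertex hcard w w
        obtain ⟨b, hba, hbw⟩ := exists_third_vertex hcard a w
        have hr := (hind w) ⟨a, haw⟩ ⟨b, hbw⟩
        obtain ⟨u, hu⟩ := exists_adj_of_reachable_ne hr
          (fun h => hba (congrArg Subtype.val h).symm)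
        have hau : G.Adj a u.1 := hu
        have h1 : c w ≠ c a := (c.valid (hadj a haw))
        have h2 : c w ≠ c u.1 := (c.valid (hadj u.1 u.2))
        have h3 : c a ≠ c u.1 := c.valid hau
        revert h1 h2 h3
        generalize c w = x; generalize c a = y; generalize c u.1 = t
        revert x y t; decide
    · exact hge
  obtain ⟨p, hp, hpl⟩ := hconn.exists_path_of_dist z w
  cases p with
  | nil =>
    exfalso
    rw [SimpleGraph.Walk.length_nil] at hpl
    rw [SimpleGraph.dist_self] at hcm
    omega
  | cons hzx p' =>
    rename_i x0
    rw [SimpleGraph.Walk.cons_isPath_iff] at hp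
    rw [SimpleGraph.Walk.length_cons] at hpl
    obtain ⟨y, hzy, hyx0⟩ := second_neighbor' hcard hind hzx
    have hwy : G.dist w y + 1 = G.dist w z := by
      have hne := adj_dist_ne' hconn c hzy w
      have hle := hmax y
      have ht : G.dist w z ≤ G.dist w y + G.dist y z := hconn.dist_triangle
      have hyz1 : G.dist y z = 1 := SimpleGraph.dist_eq_one_iff_adj.mpr hzy.symm
      omega
    obtain ⟨q0, hq0p, hq0l⟩ := hconn.exists_path_of_dist y w
    have hcy : G.dist y w = G.dist w y := SimpleGraph.dist_comm
    have hq0len : q0.length + 1 = G.dist z w := by omega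
    have hznq0 : z ∉ q0.support := by
      intro hz
      have hd1 := SimpleGraph.Walk.length_dropUntil_le q0 hz
      have hd2 := SimpleGraph.dist_le (q0.dropUntil z hz)
      omega
    have hql : (SimpleGraph.Walk.cons hzy q0).length = G.dist z w := by
      rw [SimpleGraph.Walk.length_cons]; omega
    have hA := shortest_walk_edges hconn (SimpleGraph.Walk.cons hzy q0) hql
    have hmu : ∀ e ∈ (SimpleGraph.Walk.cons hzy q0).edges, mu G z w e = 1 := by
      intro e he
      obtain ⟨a, b, rfl, h1, h2, -⟩ := hA e he
      exact mu_eq_one_of (by omega) (by omega)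
    have he'q : s(z, y) ∈ (SimpleGraph.Walk.cons hzy q0).edges := by
      rw [SimpleGraph.Walk.edges_cons]; exact List.mem_cons_self
    have he'p : s(z, y) ∉ (SimpleGraph.Walk.cons hzx p').edges := by
      rw [SimpleGraph.Walk.edges_cons, List.mem_cons]
      rintro (heq | hin)
      · exact hyx0 (Sym2.congr_right.mp heq)
      · exact hp.2 (p'.fst_mem_support_of_mem_edges hin)
    have hyw : y ≠ w := by
      intro h
      rw [h, SimpleGraph.dist_self] at hwy
      omega
    have he''ex : ∃ e ∈ q0.edges, e ∉ (SimpleGraph.Walk.cons hzx p').edges := by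
      by_contra hno
      push_neg at hno
      have hsub : ∀ e ∈ q0.edges, e ∈ p'.edges := by
        intro e he
        have h' := hno e he
        rw [SimpleGraph.Walk.edges_cons, List.mem_cons] at h'
        rcases h' with rfl | h'
        · exact absurd (mem_support_of_mem_edge' he (Sym2.mem_mk_left _ _)) hznq0
        · exact h'
      have hfin : q0.edges.toFinset = p'.edges.toFinset := by
        apply Finset.eq_of_subset_of_card_le
        · intro e he
          rw [List.mem_toFinset] at he ⊢
          exact hsub e he
        · rw [List.toFinset_card_of_nodup hp.1.edges_nodup,
            List.toFinset_card_of_nodup hq0p.edges_nodup,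
            SimpleGraph.Walk.length_edges, SimpleGraph.Walk.length_edges]
          omega
      have hmemiff : ∀ e : Sym2 V, e ∈ p'.edges ↔ e ∈ q0.edges := by
        intro e
        rw [← List.mem_toFinset, ← List.mem_toFinset (l := q0.edges), hfin]
      obtain ⟨ey, heyq0, hyey⟩ := exists_start_edge q0 hyw
      have hyp' : y ∈ p'.support := mem_support_of_mem_edge' ((hmemiff ey).mpr heyq0) hyey
      obtain ⟨e1, e2, hne12, he1, he2, hy1, hy2⟩ :=
        path_internal_two_edges p' hp.1 hyp' hyx0 hyw
      exact hne12 (path_start_edge_unique q0 hq0p e1 ((hmemiff e1).mp he1) hy1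
        e2 ((hmemiff e2).mp he2) hy2)
    obtain ⟨e'', he''q0, he''p⟩ := he''ex
    refine ⟨z, SimpleGraph.Walk.cons hzx p',
      (SimpleGraph.Walk.cons_isPath_iff hzx p').mpr hp,
      by rw [SimpleGraph.Walk.length_cons]; omega,
      s(z, y), e'', ?_, ?_, ?_, he'p, he''p, hmu _ he'q, hmu _ ?_⟩
    · intro h
      exact hznq0 (mem_support_of_mem_edge' he''q0 (h ▸ Sym2.mem_mk_left z y))
    · rw [SimpleGraph.mem_edgeFinset]
      exact hzy
    · rw [SimpleGraph.mem_edgeFinset]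
      exact q0.edges_subset_edgeSet he''q0
    · rw [SimpleGraph.Walk.edges_cons]
      exact List.mem_cons_of_mem _ he''q0
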